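/- Let ℓ ∈ ℕ. Every twice-differentiable solution a : (−1,1) → ℝ of Legendre's equation (1−τ²)·a″(τ) − 2τ·a′(τ) + ℓ(ℓ+1)·a(τ) = 0 that is bounded on (−1,1) is of the form a = C·P_ℓ for some constant C ∈ ℝ; consequently a extends continuously to [−1,1], with a(1) = C and a(−1) = (−1)^ℓ·C. (In the 4-dimensional setting these boundary values are the asymptotic charges Q₄(Y_{ℓ,m}, I⁺) = C and Q₄(Y_{ℓ,m}, I⁻) = (−1)^ℓ·C at the critical sets, giving infinitely many well-defined conserved charges.) -/

import Mathlib

/-- The Legendre polynomial `P_ν` via the Rodrigues formula. -/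
noncomputable def legendreP (ν : ℕ) (τ : ℝ) : ℝ :=
  ((-1 : ℝ) ^ ν / (2 ^ ν * Nat.factorial ν)) *
    iteratedDeriv ν (fun t : ℝ => (1 - t ^ 2) ^ ν) τ

open Polynomial Set Filter

namespace Stmt15

noncomputable def legPoly (ℓ : ℕ) : Polynomial ℝ :=
  Polynomial.C ((-1 : ℝ) ^ ℓ / (2 ^ ℓ * Nat.factorial ℓ)) *
    derivative^[ℓ] ((1 - X ^ 2) ^ ℓ)

lemma iteratedDeriv_polyEval (p : Polynomial ℝ) (n : ℕ) :
    iteratedDeriv n (fun x : ℝ => p.eval x) = fun x => (derivative^[n] p).eval x := by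
  induction n with
  | zero => simp
  | succ n ih =>
    rw [iteratedDeriv_succ, ih]
    funext x
    rw [Function.iterate_succ_apply']
    exact Polynomial.deriv _

lemma legendreP_eq (ℓ : ℕ) (τ : ℝ) : legendreP ℓ τ = (legPoly ℓ).eval τ := by
  have h : (fun t : ℝ => (1 - t ^ 2) ^ ℓ) =
      fun x : ℝ => ((1 - X ^ 2 : Polynomial ℝ) ^ ℓ).eval x := by
    funext x; simp
  rw [legendreP, legPoly, h, iteratedDeriv_polyEval]
  simp [eval_mul]

lemma deriv_u (ℓ : ℕ) :
    (1 - X ^ 2) * derivative ((1 - X ^ 2 : Polynomial ℝ) ^ ℓ) =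
      Polynomial.C (-2 * (ℓ : ℝ)) * (X * (1 - X ^ 2) ^ ℓ) := by
  cases ℓ with
  | zero => simp
  | succ n =>
    rw [derivative_pow]
    simp only [Nat.add_sub_cancel, derivative_sub, derivative_one, derivative_X_pow]
    simp only [map_mul, map_neg, map_add, map_one, map_ofNat, Nat.cast_add, Nat.cast_one,
      Nat.cast_ofNat, C_eq_natCast]
    ring

lemma rec_ode (ℓ : ℕ) (k : ℕ) :
    (1 - X ^ 2) * derivative^[k + 2] ((1 - X ^ 2 : Polynomial ℝ) ^ ℓ)
      + Polynomial.C (2 * ((ℓ : ℝ) - (k : ℝ) - 1)) *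
          (X * derivative^[k + 1] ((1 - X ^ 2 : Polynomial ℝ) ^ ℓ))
      + Polynomial.C (((k : ℝ) + 1) * (2 * (ℓ : ℝ) - (k : ℝ))) *
          derivative^[k] ((1 - X ^ 2 : Polynomial ℝ) ^ ℓ) = 0 := by
  induction k with
  | zero =>
    have h := congrArg derivative (deriv_u ℓ)
    simp only [derivative_mul, derivative_sub, derivative_one, derivative_X_pow, derivative_X,
      derivative_C, Nat.cast_ofNat, pow_one, zero_mul, zero_add, mul_one] at h
    simp only [Function.iterate_succ_apply', Function.iterate_zero_apply, Function.iterate_one]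
    simp only [map_mul, map_neg, map_add, map_sub, map_one, map_ofNat, Nat.cast_ofNat,
      C_eq_natCast, Nat.cast_zero, Nat.cast_one] at h ⊢
    norm_num at h ⊢
    linear_combination h
  | succ k ih =>
    have h := congrArg derivative ih
    simp only [derivative_add, derivative_mul, derivative_sub, derivative_one, derivative_X_pow,
      derivative_X, derivative_C, Nat.cast_ofNat, pow_one, zero_mul, zero_add, mul_one,
      derivative_zero, ← Function.iterate_succ_apply' derivative] at h
    simp only [map_mul, map_neg, map_add, map_sub, map_one, map_ofNat, Nat.cast_ofNat,
      C_eq_natCast, Nat.cast_add, Nat.cast_one] at h ⊢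
    push_cast at h ⊢
    -- rewrite iterate indices: k+1+2 = k+3 etc.
    have e3 : k + 1 + 2 = k + 3 := by omega
    have e2 : k + 1 + 1 = k + 2 := by omega
    rw [e3, e2]
    linear_combination h

lemma legPoly_ode (ℓ : ℕ) :
    (1 - X ^ 2) * derivative (derivative (legPoly ℓ)) - 2 * X * derivative (legPoly ℓ)
      + Polynomial.C ((ℓ : ℝ) * ((ℓ : ℝ) + 1)) * legPoly ℓ = 0 := by
  have h := rec_ode ℓ ℓ
  rw [legPoly]
  simp only [derivative_C_mul]
  have e2 : derivative (derivative (derivative^[ℓ] ((1 - X ^ 2 : Polynomial ℝ) ^ ℓ))) =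
      derivative^[ℓ + 2] ((1 - X ^ 2 : Polynomial ℝ) ^ ℓ) := by
    rw [← Function.iterate_succ_apply' derivative, ← Function.iterate_succ_apply' derivative]
  have e1 : derivative (derivative^[ℓ] ((1 - X ^ 2 : Polynomial ℝ) ^ ℓ)) =
      derivative^[ℓ + 1] ((1 - X ^ 2 : Polynomial ℝ) ^ ℓ) := by
    rw [← Function.iterate_succ_apply' derivative]
  rw [e2, e1]
  simp only [map_mul, map_neg, map_add, map_sub, map_one, map_ofNat, C_eq_natCast] at h ⊢
  linear_combination Polynomial.C ((-1 : ℝ) ^ ℓ / (2 ^ ℓ * Nat.factorial ℓ)) * h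

lemma hu_factor (ℓ : ℕ) : ((1 - X ^ 2 : Polynomial ℝ)) ^ ℓ =
    Polynomial.C ((-1 : ℝ) ^ ℓ) * ((X - Polynomial.C 1) ^ ℓ * (X - Polynomial.C (-1)) ^ ℓ) := by
  have h : (1 - X ^ 2 : Polynomial ℝ) =
      (-1) * ((X - Polynomial.C 1) * (X - Polynomial.C (-1))) := by
    simp only [map_one, map_neg]
    ring
  rw [h, mul_pow, mul_pow]
  congr 1
  simp [map_pow]

lemma eval_D_one (ℓ : ℕ) :
    (derivative^[ℓ] ((1 - X ^ 2 : Polynomial ℝ) ^ ℓ)).eval 1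
      = (-1) ^ ℓ * (2 ^ ℓ * ℓ.factorial) := by
  rw [hu_factor, iterate_derivative_C_mul, iterate_derivative_mul, eval_mul, eval_C,
    eval_finset_sum]
  rw [Finset.sum_eq_single 0]
  · simp only [Nat.choose_zero_right, one_smul, Nat.sub_zero, Function.iterate_zero_apply,
      iterate_derivative_X_sub_pow_self, eval_mul, eval_natCast, eval_pow, eval_sub, eval_X,
      eval_C]
    push_cast
    ring
  · intro k hk hk0
    have hkl : k ≤ ℓ := by simpa using Nat.lt_succ_iff.mp (Finset.mem_range.mp hk)
    rw [iterate_derivative_X_sub_pow, Nat.sub_sub_self hkl]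
    simp [sub_self, zero_pow hk0]
  · simp

lemma eval_D_neg_one (ℓ : ℕ) :
    (derivative^[ℓ] ((1 - X ^ 2 : Polynomial ℝ) ^ ℓ)).eval (-1) = 2 ^ ℓ * ℓ.factorial := by
  rw [hu_factor, iterate_derivative_C_mul, iterate_derivative_mul, eval_mul, eval_C,
    eval_finset_sum]
  rw [Finset.sum_eq_single ℓ]
  · simp only [Nat.choose_self, one_smul, Nat.sub_self, Function.iterate_zero_apply,
      iterate_derivative_X_sub_pow_self, eval_mul, eval_natCast, eval_pow, eval_sub, eval_X,
      eval_C]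
    have h : ((-1 : ℝ) - 1) ^ ℓ = (-1) ^ ℓ * 2 ^ ℓ := by
      rw [← neg_one_mul, ← mul_pow]
      norm_num
    rw [h]
    have h2 : ((-1 : ℝ)) ^ ℓ * ((-1) ^ ℓ * 2 ^ ℓ * ↑ℓ.factorial) =
        ((-1) * -1 : ℝ) ^ ℓ * (2 ^ ℓ * ↑ℓ.factorial) := by
      rw [mul_pow]
      ring
    rw [h2]
    norm_num
  · intro k hk hk0
    have hkl : k < ℓ := lt_of_le_of_ne (Nat.lt_succ_iff.mp (Finset.mem_range.mp hk)) hk0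
    rw [iterate_derivative_X_sub_pow ℓ k (-1 : ℝ)]
    have h0 : ℓ - k ≠ 0 := by omega
    simp [zero_pow h0]
  · simp

lemma legPoly_eval_one (ℓ : ℕ) : (legPoly ℓ).eval 1 = 1 := by
  rw [legPoly, eval_mul, eval_C, eval_D_one]
  have h1 : ((2 : ℝ) ^ ℓ * ℓ.factorial) ≠ 0 := by positivity
  field_simp
  rw [← pow_mul, mul_comm, pow_mul]
  norm_num

lemma legPoly_eval_neg_one (ℓ : ℕ) : (legPoly ℓ).eval (-1) = (-1) ^ ℓ := by
  rw [legPoly, eval_mul, eval_C, eval_D_neg_one]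
  have h1 : ((2 : ℝ) ^ ℓ * ℓ.factorial) ≠ 0 := by positivity
  field_simp

lemma const_on {F : ℝ → ℝ} {c d : ℝ} (h : ∀ τ ∈ Ioo c d, HasDerivAt F 0 τ)
    {x y : ℝ} (hx : x ∈ Ioo c d) (hy : y ∈ Ioo c d) : F x = F y := by
  wlog hxy : x ≤ y generalizing x y
  · exact (this hy hx (le_of_not_ge hxy)).symm
  have hsub : Icc x y ⊆ Ioo c d := fun t ht => ⟨lt_of_lt_of_le hx.1 ht.1, lt_of_le_of_lt ht.2 hy.2⟩
  have h2 := constant_of_has_deriv_right_zero (f := F) (a := x) (b := y)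
    (fun t ht => (h t (hsub ht)).continuousAt.continuousWithinAt)
    (fun t ht => ((h t (hsub (Ico_subset_Icc_self ht))).hasDerivWithinAt))
  exact (h2 y (right_mem_Icc.mpr hxy)).symm

lemma mono_on_Ioo {F F' : ℝ → ℝ} {c d : ℝ} (h : ∀ τ ∈ Ioo c d, HasDerivAt F (F' τ) τ)
    (h' : ∀ τ ∈ Ioo c d, 0 ≤ F' τ) {x y : ℝ} (hx : x ∈ Ioo c d) (hy : y ∈ Ioo c d)
    (hxy : x ≤ y) : F x ≤ F y := by
  have hmono := monotoneOn_of_deriv_nonneg (convex_Ioo c d)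
    (fun t ht => (h t ht).continuousAt.continuousWithinAt)
    (fun t ht => (h t (by rwa [interior_Ioo] at ht)).differentiableAt.differentiableWithinAt)
    (fun t ht => by
      rw [(h t (by rwa [interior_Ioo] at ht)).deriv]
      exact h' t (by rwa [interior_Ioo] at ht))
  exact hmono hx hy hxy

lemma no_blowup {b b' : ℝ → ℝ} {x₀ c M : ℝ} (hx₀ : x₀ < 1) (hc : 0 < c)
    (hb : ∀ τ ∈ Ioo x₀ 1, HasDerivAt b (b' τ) τ)
    (hlow : ∀ τ ∈ Ioo x₀ 1, c / (1 - τ) ≤ b' τ)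
    (hM : ∀ τ ∈ Ioo x₀ 1, b τ ≤ M) : False := by
  set u : ℝ → ℝ := fun τ => b τ + c * Real.log (1 - τ) with hu
  have hu' : ∀ τ ∈ Ioo x₀ 1, HasDerivAt u (b' τ - c / (1 - τ)) τ := by
    intro τ hτ
    have h1 : HasDerivAt (fun τ : ℝ => 1 - τ) (-1) τ := by
      simpa using (hasDerivAt_id τ).const_sub 1
    have hne : (1 : ℝ) - τ ≠ 0 := by
      have := hτ.2; intro h0; simp only [Set.mem_Ioo] at hτ; linarith
    have h2 : HasDerivAt (fun τ : ℝ => Real.log (1 - τ)) ((1 - τ)⁻¹ * (-1)) τ :=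
      (Real.hasDerivAt_log hne).comp τ h1
    have h3 := (hb τ hτ).add (h2.const_mul c)
    refine h3.congr_deriv (Eq.symm ?_)
    field_simp
    ring
  set τ₁ := (x₀ + 1)/2 with hτ₁def
  have hτ₁ : τ₁ ∈ Ioo x₀ 1 := by
    constructor <;> simp only [hτ₁def] <;> linarith
  set L := (u τ₁ - M)/c with hLdef
  have key : ∀ τ ∈ Ioo x₀ 1, τ₁ ≤ τ → L ≤ Real.log (1 - τ) := by
    intro τ hτ hle
    have h1 : u τ₁ ≤ u τ :=
      mono_on_Ioo hu' (fun σ hσ => by have := hlow σ hσ; linarith) hτ₁ hτ hle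
    have h2 : b τ ≤ M := hM τ hτ
    rw [hLdef, div_le_iff₀ hc]
    have h3 : u τ = b τ + c * Real.log (1 - τ) := rfl
    nlinarith [h1, h2]
  set ε := min ((1 - τ₁)/2) (Real.exp L / 2) with hεdef
  have hε : 0 < ε := lt_min (by have := hτ₁.2; linarith) (by positivity)
  have hmem : (1 - ε) ∈ Ioo x₀ 1 := by
    constructor
    · have h1 : ε ≤ (1 - τ₁)/2 := min_le_left _ _
      have := hτ₁.1; simp only [hτ₁def] at *; linarith
    · linarith
  have hge : τ₁ ≤ 1 - ε := by
    have h1 : ε ≤ (1 - τ₁)/2 := min_le_left _ _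
    linarith [hτ₁.2]
  have hk := key (1 - ε) hmem hge
  have hlt : Real.log (1 - (1 - ε)) < L := by
    have he : 1 - (1 - ε) = ε := by ring
    rw [he]
    calc Real.log ε ≤ Real.log (Real.exp L / 2) :=
          Real.log_le_log hε (min_le_right _ _)
      _ < Real.log (Real.exp L) := by
          apply Real.log_lt_log (by positivity)
          have := Real.exp_pos L; linarith
      _ = L := Real.log_exp L
  linarith

end Stmt15

set_option maxHeartbeats 2000000 in
/-- every bounded solution of Legendre's equation with `λ = ℓ(ℓ+1)` on
`(-1,1)` is `C·P_ℓ`; it extends continuously to `[-1,1]` with boundary values `C` at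
`τ = 1` and `(-1)^ℓ C` at `τ = -1` (the asymptotic charges at the critical sets). -/
theorem stmt_15 (ℓ : ℕ) (a : ℝ → ℝ)
    (hdiff : ∀ τ ∈ Set.Ioo (-1 : ℝ) 1,
      DifferentiableAt ℝ a τ ∧ DifferentiableAt ℝ (deriv a) τ)
    (hode : ∀ τ ∈ Set.Ioo (-1 : ℝ) 1,
      (1 - τ ^ 2) * deriv (deriv a) τ - 2 * τ * deriv a τ
        + (ℓ : ℝ) * ((ℓ : ℝ) + 1) * a τ = 0)
    (hbdd : ∃ M : ℝ, ∀ τ ∈ Set.Ioo (-1 : ℝ) 1, |a τ| ≤ M) :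
    ∃ C : ℝ,
      (∀ τ ∈ Set.Ioo (-1 : ℝ) 1, a τ = C * legendreP ℓ τ) ∧
      Filter.Tendsto a (nhdsWithin 1 (Set.Ioo (-1 : ℝ) 1)) (nhds C) ∧
      Filter.Tendsto a (nhdsWithin (-1) (Set.Ioo (-1 : ℝ) 1)) (nhds ((-1 : ℝ) ^ ℓ * C)) := by
  obtain ⟨M, hM⟩ := hbdd
  set p := Stmt15.legPoly ℓ with hp
  set P : ℝ → ℝ := fun τ => p.eval τ with hPdef
  set P₁ : ℝ → ℝ := fun τ => (derivative p).eval τ with hP₁def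
  set P₂ : ℝ → ℝ := fun τ => (derivative (derivative p)).eval τ with hP₂def
  set lam : ℝ := (ℓ : ℝ) * ((ℓ : ℝ) + 1) with hlamdef
  have hPd : ∀ τ : ℝ, HasDerivAt P (P₁ τ) τ := fun τ => Polynomial.hasDerivAt p τ
  have hP₁d : ∀ τ : ℝ, HasDerivAt P₁ (P₂ τ) τ := fun τ => Polynomial.hasDerivAt _ τ
  have odeP : ∀ τ : ℝ, (1 - τ^2) * P₂ τ - 2 * τ * P₁ τ + lam * P τ = 0 := by
    intro τ
    have h := congrArg (Polynomial.eval τ) (Stmt15.legPoly_ode ℓ)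
    simpa using h
  have hA : ∀ τ ∈ Set.Ioo (-1:ℝ) 1, HasDerivAt a (deriv a τ) τ :=
    fun τ hτ => ((hdiff τ hτ).1).hasDerivAt
  have hA' : ∀ τ ∈ Set.Ioo (-1:ℝ) 1, HasDerivAt (deriv a) (deriv (deriv a) τ) τ :=
    fun τ hτ => ((hdiff τ hτ).2).hasDerivAt
  have hneI : ∀ τ ∈ Set.Ioo (-1:ℝ) 1, (1 : ℝ) - τ^2 ≠ 0 := by
    intro τ hτ
    obtain ⟨h1, h2⟩ := hτ
    nlinarith
  set F : ℝ → ℝ := fun τ => (1 - τ^2) * (deriv a τ * P τ - a τ * P₁ τ) with hFdef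
  have hFd : ∀ τ ∈ Set.Ioo (-1:ℝ) 1, HasDerivAt F 0 τ := by
    intro τ hτ
    have h1 : HasDerivAt (fun τ => deriv a τ * P τ - a τ * P₁ τ)
        (deriv (deriv a) τ * P τ - a τ * P₂ τ) τ := by
      have h := ((hA' τ hτ).mul (hPd τ)).sub ((hA τ hτ).mul (hP₁d τ))
      refine h.congr_deriv (Eq.symm ?_)
      ring
    have h0 : HasDerivAt (fun τ : ℝ => 1 - τ^2) (-(2*τ)) τ := by
      simpa using (hasDerivAt_pow 2 τ).const_sub 1
    have h2 := h0.mul h1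
    refine h2.congr_deriv (Eq.symm ?_)
    have ha := hode τ hτ
    have hb := odeP τ
    linear_combination (a τ) * hb - (P τ) * ha
  have h0mem : (0:ℝ) ∈ Set.Ioo (-1:ℝ) 1 := by constructor <;> norm_num
  obtain ⟨K, hKc⟩ : ∃ K : ℝ, ∀ τ ∈ Set.Ioo (-1:ℝ) 1, F τ = K :=
    ⟨F 0, fun τ hτ => Stmt15.const_on hFd hτ h0mem⟩
  have hM0 : 0 ≤ M := le_trans (abs_nonneg _) (hM 0 h0mem)
  have hP1 : P 1 = 1 := Stmt15.legPoly_eval_one ℓ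
  have hPneg1 : P (-1) = (-1)^ℓ := Stmt15.legPoly_eval_neg_one ℓ
  obtain ⟨ε, hε, hball⟩ : ∃ ε > 0, ∀ τ : ℝ, |τ - 1| < ε → |P τ - 1| < 1/2 := by
    have hc : ContinuousAt P 1 := (Polynomial.continuous p).continuousAt
    have h := Metric.continuousAt_iff.mp hc (1/2) (by norm_num)
    obtain ⟨d, hd, h⟩ := h
    refine ⟨d, hd, fun τ hτ => ?_⟩
    have := h (show dist τ 1 < d by rwa [Real.dist_eq])
    rwa [Real.dist_eq, hP1] at this
  set δ : ℝ := min (ε/2) (1/2) with hδdef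
  have hδpos : 0 < δ := lt_min (by linarith) (by norm_num)
  have hδhalf : δ ≤ 1/2 := min_le_right _ _
  have hPbnd : ∀ τ ∈ Set.Ioo (1-δ) 1, 1/2 < P τ ∧ P τ < 3/2 := by
    intro τ hτ
    have hε2 : δ ≤ ε/2 := min_le_left _ _
    have h1 : |τ - 1| < ε := by
      rw [abs_sub_lt_iff]
      constructor
      · linarith [hτ.2]
      · linarith [hτ.1]
    have h2 := hball τ h1
    rw [abs_sub_lt_iff] at h2
    constructor <;> linarith [h2.1, h2.2]
  have hJI : Set.Ioo (1-δ) 1 ⊆ Set.Ioo (-1:ℝ) 1 := by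
    intro τ hτ
    exact ⟨by linarith [hτ.1], hτ.2⟩
  have hbd : ∀ τ ∈ Set.Ioo (1-δ) 1,
      HasDerivAt (fun τ => a τ / P τ) (K / ((1 - τ^2) * (P τ)^2)) τ := by
    intro τ hτ
    have hPne : P τ ≠ 0 := by linarith [(hPbnd τ hτ).1]
    have h := (hA τ (hJI hτ)).div (hPd τ) hPne
    refine h.congr_deriv (Eq.symm ?_)
    have hW : (1 - τ^2) * (deriv a τ * P τ - a τ * P₁ τ) = K := hKc τ (hJI hτ)
    have hne := hneI τ (hJI hτ)
    field_simp
    linear_combination (-1 : ℝ) * hW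
  have hKle : ∀ s : ℝ, s = 1 ∨ s = -1 → ¬ (0 < s * K) := by
    intro s hs hpos
    have habs : ∀ x : ℝ, s * x ≤ |x| := by
      intro x
      rcases hs with h | h
      · rw [h, one_mul]; exact le_abs_self x
      · rw [h, neg_one_mul]; exact neg_le_abs x
    apply Stmt15.no_blowup (b := fun τ => s * (a τ / P τ))
      (b' := fun τ => s * K / ((1 - τ^2) * (P τ)^2))
      (x₀ := 1 - δ) (c := s*K*(2/9)) (M := 2*M)
      (by linarith) (by nlinarith)
    · intro τ hτ
      have h := (hbd τ hτ).const_mul s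
      refine h.congr_deriv (Eq.symm ?_)
      ring
    · intro τ hτ
      have h1 : (0:ℝ) < 1 - τ := by linarith [hτ.2]
      have h2 : (0:ℝ) < 1 + τ := by linarith [hτ.1, hδhalf]
      have hPb := hPbnd τ hτ
      have hP2 : (P τ)^2 ≤ 9/4 := by nlinarith [hPb.1, hPb.2]
      have h1τ : 1 + τ ≤ 2 := by linarith [hτ.2]
      have hPpos : (0:ℝ) < P τ := by linarith [hPb.1]
      have ht2 : (0:ℝ) < 1 - τ^2 := by nlinarith [mul_pos h1 h2]
      have hD : (0:ℝ) < (1 - τ^2) * (P τ)^2 := mul_pos ht2 (pow_pos hPpos 2)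
      have huq : (1+τ) * (P τ)^2 ≤ 9/2 := by nlinarith [hP2, h1τ, sq_nonneg (P τ)]
      have hDle : (1 - τ^2) * (P τ)^2 ≤ (9/2) * (1-τ) := by
        nlinarith [mul_le_mul_of_nonneg_left huq (le_of_lt h1)]
      rw [div_le_div_iff₀ h1 hD]
      have hmul := mul_le_mul_of_nonneg_left hDle (le_of_lt hpos)
      nlinarith [hmul]
    · intro τ hτ
      have hPb := hPbnd τ hτ
      have hMa := hM τ (hJI hτ)
      have h1 : s * (a τ / P τ) ≤ |a τ / P τ| := habs _
      have h2 : |a τ / P τ| = |a τ| / P τ := by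
        rw [abs_div, abs_of_pos (by linarith [hPb.1] : (0:ℝ) < P τ)]
      have h3 : |a τ| / P τ ≤ 2 * M := by
        rw [div_le_iff₀ (by linarith [hPb.1] : (0:ℝ) < P τ)]
        nlinarith [hPb.1, abs_nonneg (a τ)]
      linarith
  have hKzero : K = 0 := by
    rcases lt_trichotomy K 0 with hK0 | hK0 | hK0
    · exact absurd (by linarith : 0 < (-1) * K) (hKle (-1) (Or.inr rfl))
    · exact hK0
    · exact absurd (by linarith : 0 < 1 * K) (hKle 1 (Or.inl rfl))
  have hW0 : ∀ τ ∈ Set.Ioo (-1:ℝ) 1, deriv a τ * P τ - a τ * P₁ τ = 0 := by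
    intro τ hτ
    have h := hKc τ hτ
    rw [hKzero] at h
    exact (mul_eq_zero.mp h).resolve_left (hneI τ hτ)
  -- a / P is constant near 1
  set τc : ℝ := 1 - δ/2 with hτcdef
  have hτcJ : τc ∈ Set.Ioo (1-δ) 1 := by
    constructor <;> simp only [hτcdef] <;> linarith
  set C : ℝ := a τc / P τc with hCdef
  have hb0 : ∀ τ ∈ Set.Ioo (1-δ) 1, HasDerivAt (fun τ => a τ / P τ) 0 τ := by
    intro τ hτ
    have h := hbd τ hτ
    rwa [hKzero, zero_div] at h
  have haCP : ∀ τ ∈ Set.Ioo (1-δ) 1, a τ = C * P τ := by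
    intro τ hτ
    have hPne : P τ ≠ 0 := by linarith [(hPbnd τ hτ).1]
    have h := Stmt15.const_on hb0 hτ hτcJ
    rw [hCdef, ← h]
    field_simp
  -- propagate to all of (-1,1) by ODE uniqueness
  set g : ℝ → ℝ := fun τ => a τ - C * P τ with hgdef
  set g1 : ℝ → ℝ := fun τ => deriv a τ - C * P₁ τ with hg1def
  set S : Set ℝ := {τ | τ ∈ Set.Ioo (-1:ℝ) 1 ∧ g τ = 0 ∧ g1 τ = 0} with hSdef
  have hJS : ∀ τ ∈ Set.Ioo (1-δ) 1, τ ∈ S := by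
    intro τ hτ
    refine ⟨hJI hτ, by simp only [hgdef]; rw [haCP τ hτ]; ring, ?_⟩
    have hev : a =ᶠ[nhds τ] fun σ => C * P σ := by
      filter_upwards [Ioo_mem_nhds hτ.1 hτ.2] with σ hσ using haCP σ hσ
    have h1 : deriv a τ = C * P₁ τ := by
      rw [hev.deriv_eq, ((hPd τ).const_mul C).deriv]
    simp only [hg1def]
    rw [h1]
    ring
  have hlam0 : (0:ℝ) ≤ lam := by positivity
  have hopen : ∀ τ₀ ∈ S, ∃ r > 0, Set.Ioo (τ₀-r) (τ₀+r) ⊆ S := by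
    intro τ₀ hτ₀
    obtain ⟨hτ₀I, hg0, hg10⟩ := hτ₀
    obtain ⟨hm1, h1m⟩ := hτ₀I
    set m : ℝ := min (τ₀ + 1) (1 - τ₀) with hmdef
    have hmin1 : m ≤ τ₀ + 1 := min_le_left _ _
    have hmin2 : m ≤ 1 - τ₀ := min_le_right _ _
    have hmpos : 0 < m := lt_min (by linarith) (by linarith)
    set ρ : ℝ := m / 2 with hρdef
    have hρpos : 0 < ρ := by rw [hρdef]; linarith
    have hρm : ρ = m / 2 := hρdef
    have hsub : Set.Ioo (τ₀ - ρ) (τ₀ + ρ) ⊆ Set.Ioo (-1:ℝ) 1 := by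
      intro t ht
      have h3 := ht.1
      have h4 := ht.2
      constructor
      · rw [hρm] at h3; linarith
      · rw [hρm] at h4; linarith
    have hquad : ∀ t ∈ Set.Ioo (τ₀ - ρ) (τ₀ + ρ), ρ^2 ≤ 1 - t^2 := by
      intro t ht
      have h3 := ht.1
      have h4 := ht.2
      have e1 : ρ ≤ 1 - t := by rw [hρm] at h4 ⊢; linarith
      have e2 : ρ ≤ 1 + t := by rw [hρm] at h3 ⊢; linarith
      nlinarith [mul_le_mul e1 e2 (le_of_lt hρpos) (by linarith)]
    set Kl : ℝ := max 1 ((2 + lam)/ρ^2) with hKldef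
    have hKl1 : (1:ℝ) ≤ Kl := le_max_left _ _
    have hKl0 : (0:ℝ) ≤ Kl := by linarith
    set Kp : NNReal := Real.toNNReal Kl with hKpdef
    have hKpc : (Kp : ℝ) = Kl := Real.coe_toNNReal _ hKl0
    have hρ2 : (0:ℝ) < ρ^2 := pow_pos hρpos 2
    have hKl2 : (2 + lam) ≤ Kl * ρ^2 := by
      have h := le_max_right 1 ((2 + lam)/ρ^2)
      have h2 := mul_le_mul_of_nonneg_right h (le_of_lt hρ2)
      rw [div_mul_cancel₀ _ (ne_of_gt hρ2)] at h2
      rw [hKldef]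
      exact h2
    set v : ℝ → ℝ × ℝ → ℝ × ℝ :=
      fun t z => (z.2, (2*t*z.2 - lam*z.1)/(1 - t^2)) with hvdef
    set sset : ℝ → Set (ℝ × ℝ) :=
      fun t => if t ∈ Set.Ioo (τ₀-ρ) (τ₀+ρ) then Set.univ else (∅ : Set (ℝ×ℝ)) with hssetdef
    have hvlip : ∀ t, LipschitzOnWith Kp (v t) (sset t) := by
      intro t
      by_cases ht : t ∈ Set.Ioo (τ₀-ρ) (τ₀+ρ)
      · simp only [hssetdef, if_pos ht]
        rw [lipschitzOnWith_univ]
        apply LipschitzWith.of_dist_le_mul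
        intro z w
        have hq := hquad t ht
        have hposq : (0:ℝ) < 1 - t^2 := lt_of_lt_of_le hρ2 hq
        have htI := hsub ht
        have hd1 : |z.1 - w.1| ≤ dist z w := by
          rw [← Real.dist_eq]; exact le_trans (le_max_left _ _) (le_of_eq (Prod.dist_eq).symm)
        have hd2 : |z.2 - w.2| ≤ dist z w := by
          rw [← Real.dist_eq]; exact le_trans (le_max_right _ _) (le_of_eq (Prod.dist_eq).symm)
        simp only [hvdef]
        rw [Prod.dist_eq]
        apply max_le
        · rw [Real.dist_eq, hKpc]
          calc |z.2 - w.2| ≤ dist z w := hd2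
            _ ≤ Kl * dist z w := le_mul_of_one_le_left dist_nonneg hKl1
        · rw [Real.dist_eq]
          have heq : (2*t*z.2 - lam*z.1)/(1 - t^2) - (2*t*w.2 - lam*w.1)/(1 - t^2)
              = (2*t*(z.2 - w.2) - lam*(z.1 - w.1))/(1 - t^2) := by
            field_simp
            ring
          rw [heq, abs_div, abs_of_pos hposq, div_le_iff₀ hposq, hKpc]
          have ht1 : |t| ≤ 1 := by
            rw [abs_le]
            exact ⟨le_of_lt htI.1, le_of_lt htI.2⟩
          have habs2 : |2*t*(z.2 - w.2) - lam*(z.1 - w.1)|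
              ≤ 2 * |z.2 - w.2| + lam * |z.1 - w.1| := by
            have t1 : |2*t*(z.2 - w.2) - lam*(z.1 - w.1)|
                ≤ |2*t*(z.2 - w.2)| + |lam*(z.1 - w.1)| := abs_sub _ _
            have t2 : |2*t*(z.2 - w.2)| = 2 * |t| * |z.2 - w.2| := by
              rw [abs_mul, abs_mul]
              norm_num
            have t3 : |lam*(z.1 - w.1)| = lam * |z.1 - w.1| := by
              rw [abs_mul, abs_of_nonneg hlam0]
            have t4 : 2 * |t| * |z.2 - w.2| ≤ 2 * |z.2 - w.2| := by
              nlinarith [abs_nonneg (z.2 - w.2), abs_nonneg t]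
            linarith
          have e1 : lam * |z.1 - w.1| ≤ lam * dist z w :=
            mul_le_mul_of_nonneg_left hd1 hlam0
          have e2 : 2 * |z.2 - w.2| ≤ 2 * dist z w := by linarith
          calc |2*t*(z.2 - w.2) - lam*(z.1 - w.1)| ≤ 2 * dist z w + lam * dist z w := by
                linarith
            _ = (2 + lam) * dist z w := by ring
            _ ≤ (Kl * ρ^2) * dist z w := mul_le_mul_of_nonneg_right hKl2 dist_nonneg
            _ ≤ (Kl * (1 - t^2)) * dist z w :=
                mul_le_mul_of_nonneg_right (mul_le_mul_of_nonneg_left hq hKl0) dist_nonneg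
            _ = Kl * dist z w * (1 - t^2) := by ring
      · simp only [hssetdef, if_neg ht]
        exact lipschitzOnWith_empty _ _
    have hf : ∀ t ∈ Set.Ioo (τ₀-ρ) (τ₀+ρ),
        HasDerivAt (fun t => (g t, g1 t)) (v t (g t, g1 t)) t ∧ (g t, g1 t) ∈ sset t := by
      intro t ht
      refine ⟨?_, by simp only [hssetdef, if_pos ht]; trivial⟩
      have htI := hsub ht
      have hgd : HasDerivAt g (g1 t) t := (hA t htI).sub ((hPd t).const_mul C)
      have hg1d : HasDerivAt g1 ((2*t*(g1 t) - lam*(g t))/(1 - t^2)) t := by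
        have h1 : HasDerivAt g1 (deriv (deriv a) t - C * P₂ t) t :=
          (hA' t htI).sub ((hP₁d t).const_mul C)
        refine h1.congr_deriv (Eq.symm ?_)
        rw [div_eq_iff (hneI t htI)]
        have ha := hode t htI
        have hb := odeP t
        simp only [hgdef, hg1def]
        linear_combination -ha + C * hb
      exact hgd.prodMk hg1d
    have hzero : ∀ t ∈ Set.Ioo (τ₀-ρ) (τ₀+ρ),
        HasDerivAt (fun _ : ℝ => ((0:ℝ),(0:ℝ))) (v t ((0:ℝ),(0:ℝ))) t ∧
          ((0:ℝ),(0:ℝ)) ∈ sset t := by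
      intro t ht
      refine ⟨?_, by simp only [hssetdef, if_pos ht]; trivial⟩
      have hv0 : v t ((0:ℝ),(0:ℝ)) = ((0:ℝ),(0:ℝ)) := by
        simp [hvdef]
      rw [hv0]
      exact hasDerivAt_const t _
    have hmem : τ₀ ∈ Set.Ioo (τ₀ - ρ) (τ₀ + ρ) := by constructor <;> linarith
    have huniq := ODE_solution_unique_of_mem_Ioo (fun t _ => hvlip t) hmem hf hzero
      (show (g τ₀, g1 τ₀) = ((0:ℝ),(0:ℝ)) by rw [hg0, hg10])
    refine ⟨ρ, hρpos, fun t ht => ⟨hsub ht, ?_, ?_⟩⟩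
    · exact congrArg Prod.fst (huniq ht)
    · exact congrArg Prod.snd (huniq ht)
  have hSopen : IsOpen S := by
    rw [isOpen_iff_mem_nhds]
    intro τ₀ hτ₀
    obtain ⟨r, hr, hsubr⟩ := hopen τ₀ hτ₀
    exact Filter.mem_of_superset (Ioo_mem_nhds (by linarith) (by linarith)) hsubr
  have hSI : Set.Ioo (-1:ℝ) 1 ⊆ S := by
    apply isPreconnected_Ioo.subset_of_closure_inter_subset hSopen
    · exact ⟨τc, hJI hτcJ, hJS τc hτcJ⟩
    · rintro τ ⟨hτcl, hτI⟩
      have hgc : ContinuousAt g τ :=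
        (((hdiff τ hτI).1).sub (((hPd τ).differentiableAt).const_mul C)).continuousAt
      have hg1c : ContinuousAt g1 τ :=
        (((hdiff τ hτI).2).sub (((hP₁d τ).differentiableAt).const_mul C)).continuousAt
      have hnb : (nhdsWithin τ S).NeBot := mem_closure_iff_nhdsWithin_neBot.mp hτcl
      refine ⟨hτI, ?_, ?_⟩
      · have t1 : Filter.Tendsto g (nhdsWithin τ S) (nhds (g τ)) := hgc.continuousWithinAt
        have t2 : Filter.Tendsto g (nhdsWithin τ S) (nhds 0) := by
          apply Filter.Tendsto.congr' _ tendsto_const_nhds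
          filter_upwards [self_mem_nhdsWithin] with σ hσ
          exact (hσ.2.1).symm
        exact tendsto_nhds_unique t1 t2
      · have t1 : Filter.Tendsto g1 (nhdsWithin τ S) (nhds (g1 τ)) := hg1c.continuousWithinAt
        have t2 : Filter.Tendsto g1 (nhdsWithin τ S) (nhds 0) := by
          apply Filter.Tendsto.congr' _ tendsto_const_nhds
          filter_upwards [self_mem_nhdsWithin] with σ hσ
          exact (hσ.2.2).symm
        exact tendsto_nhds_unique t1 t2
  have haC : ∀ τ ∈ Set.Ioo (-1:ℝ) 1, a τ = C * P τ := by
    intro τ hτ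
    have h := (hSI hτ).2.1
    simp only [hgdef] at h
    linarith
  refine ⟨C, ?_, ?_, ?_⟩
  · intro τ hτ
    rw [Stmt15.legendreP_eq]
    exact haC τ hτ
  · have hcontP : Continuous (fun τ => C * P τ) :=
      continuous_const.mul (Polynomial.continuous p)
    have h1 : Filter.Tendsto (fun τ => C * P τ) (nhdsWithin 1 (Set.Ioo (-1:ℝ) 1))
        (nhds (C * P 1)) := (hcontP.tendsto 1).mono_left nhdsWithin_le_nhds
    rw [hP1, mul_one] at h1
    apply h1.congr'
    filter_upwards [self_mem_nhdsWithin] with τ hτ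
    exact (haC τ hτ).symm
  · have hcontP : Continuous (fun τ => C * P τ) :=
      continuous_const.mul (Polynomial.continuous p)
    have h1 : Filter.Tendsto (fun τ => C * P τ) (nhdsWithin (-1) (Set.Ioo (-1:ℝ) 1))
        (nhds (C * P (-1))) := (hcontP.tendsto (-1)).mono_left nhdsWithin_le_nhds
    rw [hPneg1] at h1
    rw [show ((-1:ℝ)^ℓ * C) = C * (-1)^ℓ from mul_comm _ _]
    apply h1.congr'
    filter_upwards [self_mem_nhdsWithin] with τ hτ
    exact (haC τ hτ).symm
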